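/- On the reference prism with λ₁=1−x−y, λ₂=x, λ₃=y, λ₀=z, λ₄=z+1, λ₅=z−1, define ψ₁₀ = (1/4)λ₄λ₅(1−λ₀) = (1/4)(z²−1)(1−z) and ψ₁₁ = (1/4)(z²−1)(1+z). Then ψ₁₀(Vᵢ) = ψ₁₁(Vᵢ) = 0 for all six vertices Vᵢ, ∂ψ₁₀/∂n(Mⱼ) = ∂ψ₁₁/∂n(Mⱼ) = 0 at the three side-face centroids M₁, M₂, M₃, and at the bottom/top centroids M₄=(1/3,1/3,−1), M₅=(1/3,1/3,1) (with outward normals (0,0,−1) and (0,0,1) respectively): ∂ψ₁₀/∂n(M₄) = 1, ∂ψ₁₀/∂n(M₅) = 0, ∂ψ₁₁/∂n(M₄) = 0, ∂ψ₁₁/∂n(M₅) = 1. -/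

import Mathlib

noncomputable section

def pdx (f : ℝ → ℝ → ℝ → ℝ) (a b c : ℝ) : ℝ := deriv (fun t => f t b c) a
def pdy (f : ℝ → ℝ → ℝ → ℝ) (a b c : ℝ) : ℝ := deriv (fun t => f a t c) b
def pdz (f : ℝ → ℝ → ℝ → ℝ) (a b c : ℝ) : ℝ := deriv (fun t => f a b t) c

/-- `ψ₁₀ = (1/4)(z²−1)(1−z)` and `ψ₁₁ = (1/4)(z²−1)(1+z)` on the reference
prism. -/
def psi10 (x y z : ℝ) : ℝ := (1/4) * (z^2 - 1) * (1 - z)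
def psi11 (x y z : ℝ) : ℝ := (1/4) * (z^2 - 1) * (1 + z)

/-- Nodal properties of `ψ₁₀`, `ψ₁₁`: they vanish at all six vertices, their
normal derivatives vanish at the three side-face centroids, and at the
bottom/top centroids (outward normals `(0,0,−1)` and `(0,0,1)`) they realize
the corresponding normal-derivative degrees of freedom. -/
theorem psi_top_bottom_nodal :
    (psi10 0 0 (-1) = 0 ∧ psi10 1 0 (-1) = 0 ∧ psi10 0 1 (-1) = 0 ∧
      psi10 0 0 1 = 0 ∧ psi10 1 0 1 = 0 ∧ psi10 0 1 1 = 0) ∧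
    (psi11 0 0 (-1) = 0 ∧ psi11 1 0 (-1) = 0 ∧ psi11 0 1 (-1) = 0 ∧
      psi11 0 0 1 = 0 ∧ psi11 1 0 1 = 0 ∧ psi11 0 1 1 = 0) ∧
    ((1/Real.sqrt 2) * (pdx psi10 (1/2) (1/2) 0 + pdy psi10 (1/2) (1/2) 0) = 0 ∧
      -pdx psi10 0 (1/2) 0 = 0 ∧ -pdy psi10 (1/2) 0 0 = 0) ∧
    ((1/Real.sqrt 2) * (pdx psi11 (1/2) (1/2) 0 + pdy psi11 (1/2) (1/2) 0) = 0 ∧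
      -pdx psi11 0 (1/2) 0 = 0 ∧ -pdy psi11 (1/2) 0 0 = 0) ∧
    -pdz psi10 (1/3) (1/3) (-1) = 1 ∧
    pdz psi10 (1/3) (1/3) 1 = 0 ∧
    -pdz psi11 (1/3) (1/3) (-1) = 0 ∧
    pdz psi11 (1/3) (1/3) 1 = 1 := by

  have hx10 : ∀ b c, pdx psi10 0 b c = 0 ∧ pdy psi10 0 b c = 0 := by
    intro b c; constructor <;> simp [pdx, pdy, psi10]
  have d10 : ∀ c : ℝ, pdz psi10 0 0 c = (1/4) * ((2*c) * (1 - c) + (c^2 - 1) * (-1)) := by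
    intro c
    have : (fun t : ℝ => psi10 0 0 t) = fun t => (1/4) * (t^2 - 1) * (1 - t) := rfl
    rw [pdz, this]
    have h1 : HasDerivAt (fun t : ℝ => t^2 - 1) (2*c) c := by
      simpa using ((hasDerivAt_pow 2 c).sub_const 1)
    have h2 : HasDerivAt (fun t : ℝ => 1 - t) (-1 : ℝ) c := by
      simpa using ((hasDerivAt_id c).const_sub 1)
    have := ((h1.const_mul (1/4 : ℝ)).mul h2)
    have := this.deriv
    exact this.trans (by ring)
  have d11 : ∀ c : ℝ, pdz psi11 0 0 c = (1/4) * ((2*c) * (1 + c) + (c^2 - 1) * 1) := by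
    intro c
    have : (fun t : ℝ => psi11 0 0 t) = fun t => (1/4) * (t^2 - 1) * (1 + t) := rfl
    rw [pdz, this]
    have h1 : HasDerivAt (fun t : ℝ => t^2 - 1) (2*c) c := by
      simpa using ((hasDerivAt_pow 2 c).sub_const 1)
    have h2 : HasDerivAt (fun t : ℝ => 1 + t) (1 : ℝ) c := by
      simpa using ((hasDerivAt_id c).const_add 1)
    have := ((h1.const_mul (1/4 : ℝ)).mul h2)
    have := this.deriv
    exact this.trans (by ring)
  have e10 : ∀ a b c : ℝ, pdz psi10 a b c = pdz psi10 0 0 c := by intro a b c; rfl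
  have e11 : ∀ a b c : ℝ, pdz psi11 a b c = pdz psi11 0 0 c := by intro a b c; rfl
  refine ⟨⟨by norm_num [psi10], by norm_num [psi10], by norm_num [psi10],
      by norm_num [psi10], by norm_num [psi10], by norm_num [psi10]⟩,
    ⟨by norm_num [psi11], by norm_num [psi11], by norm_num [psi11],
      by norm_num [psi11], by norm_num [psi11], by norm_num [psi11]⟩,
    ⟨by simp [pdx, pdy, psi10], by simp [pdx, psi10], by simp [pdy, psi10]⟩,
    ⟨by simp [pdx, pdy, psi11], by simp [pdx, psi11], by simp [pdy, psi11]⟩,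
    by rw [e10, d10]; norm_num,
    by rw [e10, d10]; norm_num,
    by rw [e11, d11]; norm_num,
    by rw [e11, d11]; norm_num⟩
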